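/- Let P be a hereditary graph class, let G be a finite connected graph that does not belong to P, and let Z be a nonempty set of vertices of G such that every forbidden set X of G contains Z and the induced subgraph G[X] is biconnected. Then for every set S ⊆ V(G) with Z ⊆ S and G[S] connected: S is a maximal connected P set of G if and only if V(G) \ N(S) is a maximal P set of G, where N(S) denotes the set of vertices outside S having a neighbor in S. -/
import Mathlib


attribute [local instance] Classical.propDecidable

/-- A *graph class*: a collection of finite simple graphs, given as a property of
simple graphs over every finite vertex type. -/
abbrev GraphClass : Type 1 :=
  ∀ (V : Type) [Fintype V], SimpleGraph V → Prop

/-- The graph class is a nonempty collection of graphs. -/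
def GraphClass.NonemptyClass (P : GraphClass) : Prop :=
  ∃ (V : Type) (_ : Fintype V) (G : SimpleGraph V), P V G

/-- The graph class is closed under isomorphism. -/
def GraphClass.IsoClosed (P : GraphClass) : Prop :=
  ∀ (V W : Type) (_ : Fintype V) (_ : Fintype W) (G : SimpleGraph V) (H : SimpleGraph W),
    _root_.Nonempty (G ≃g H) → (P V G ↔ P W H)

/-- The graph class is hereditary: it is closed under taking induced subgraphs. -/
def GraphClass.Hereditary (P : GraphClass) : Prop :=
  ∀ (V : Type) (_ : Fintype V) (G : SimpleGraph V) (S : Set V),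
    P V G → P (↥S) (G.induce S)

variable {V : Type} [Fintype V]

/-- `S ⊆ V(G)` is a `P` set of `G` if the induced subgraph `G[S]` belongs to `P`. -/
def IsPSet (P : GraphClass) (G : SimpleGraph V) (S : Set V) : Prop :=
  P (↥S) (G.induce S)

/-- `S` is a maximal `P` set of `G`: a `P` set with no proper superset that is a `P` set. -/
def IsMaxPSet (P : GraphClass) (G : SimpleGraph V) (S : Set V) : Prop :=
  IsPSet P G S ∧ ∀ T : Set V, S ⊂ T → ¬ IsPSet P G T

/-- `S` is a connected `P` set of `G`: a `P` set inducing a connected subgraph. -/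
def IsConnPSet (P : GraphClass) (G : SimpleGraph V) (S : Set V) : Prop :=
  IsPSet P G S ∧ (G.induce S).Connected

/-- `S` is a maximal connected `P` set of `G`: a connected `P` set contained in no
strictly larger connected `P` set. -/
def IsMaxConnPSet (P : GraphClass) (G : SimpleGraph V) (S : Set V) : Prop :=
  IsConnPSet P G S ∧ ∀ T : Set V, S ⊂ T → ¬ IsConnPSet P G T

/-- A forbidden set of `G` (with respect to the class `P`): an inclusion-minimal vertex
set inducing a subgraph that is not in `P`. -/
def IsForbiddenSet (P : GraphClass) (G : SimpleGraph V) (X : Set V) : Prop :=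
  ¬ IsPSet P G X ∧ ∀ Y : Set V, Y ⊂ X → IsPSet P G Y

/-- A finite graph is biconnected if it is connected and remains connected after the
deletion of any single vertex. -/
def IsBiconnected {W : Type} (H : SimpleGraph W) : Prop :=
  H.Connected ∧ ∀ w : W, (H.induce {x | x ≠ w}).Connected

/-- The neighborhood `N(S)` of a vertex set `S`: all vertices outside `S` having a
neighbor in `S`. -/
def setNbhd {V : Type} (G : SimpleGraph V) (S : Set V) : Set V :=
  {x | x ∉ S ∧ ∃ s ∈ S, G.Adj x s}


section Aux

variable {V : Type} [Fintype V]

/-- Iso between a double induced subgraph and the corresponding induced subgraph. -/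
def doubleInduceIso (G : SimpleGraph V) (T T' : Set V) (h : T ⊆ T') :
    ((G.induce T').induce {x : ↥T' | (x : V) ∈ T}) ≃g G.induce T where
  toEquiv := { toFun := fun a => ⟨a.1.1, a.2⟩
               invFun := fun b => ⟨⟨b.1, h b.2⟩, b.2⟩
               left_inv := fun _ => rfl
               right_inv := fun _ => rfl }
  map_rel_iff' := Iff.rfl

/-- A hereditary, iso-closed class is downward closed on vertex subsets. -/
lemma IsPSet.mono (P : GraphClass) (hiso : P.IsoClosed) (hher : P.Hereditary)
    (G : SimpleGraph V) {T T' : Set V} (h : T ⊆ T') (hP : IsPSet P G T') :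
    IsPSet P G T := by
  have h1 := hher ↥T' inferInstance (G.induce T') {x : ↥T' | (x : V) ∈ T} hP
  exact (hiso _ _ _ _ _ _ ⟨doubleInduceIso G T T' h⟩).mp h1

/-- Every non-`P` set contains a forbidden set. -/
lemma exists_forbidden (P : GraphClass) (G : SimpleGraph V) :
    ∀ T : Set V, ¬ IsPSet P G T → ∃ X, X ⊆ T ∧ IsForbiddenSet P G X := by
  have key : ∀ n : ℕ, ∀ T : Set V, T.ncard = n → ¬ IsPSet P G T →
      ∃ X, X ⊆ T ∧ IsForbiddenSet P G X := by
    intro n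
    induction n using Nat.strong_induction_on with
    | _ n ih =>
      intro T hcard hT
      by_cases hmin : ∀ Y : Set V, Y ⊂ T → IsPSet P G Y
      · exact ⟨T, subset_refl _, hT, hmin⟩
      · push_neg at hmin
        obtain ⟨Y, hYT, hY⟩ := hmin
        have hlt : Y.ncard < n := hcard ▸ Set.ncard_lt_ncard hYT (Set.toFinite T)
        obtain ⟨X, hXY, hX⟩ := ih _ hlt Y rfl hY
        exact ⟨X, hXY.trans hYT.subset, hX⟩
  exact fun T hT => key T.ncard T rfl hT

/-- If an induced subgraph on `X` is connected, `X` meets `S`, and `X` avoids the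
neighborhood of `S`, then `X ⊆ S`. -/
lemma escape_subset (G : SimpleGraph V) (S X : Set V) (hconn : (G.induce X).Connected)
    (hmeet : (X ∩ S).Nonempty) (hdisj : ∀ x ∈ X, x ∉ setNbhd G S) : X ⊆ S := by
  obtain ⟨a, haX, haS⟩ := hmeet
  have key : ∀ {b c : ↥X} (_ : (G.induce X).Walk b c), (b : V) ∈ S → (c : V) ∈ S := by
    intro b c w
    induction w with
    | nil => exact id
    | cons hadj p ih =>
      rename_i u d e
      intro hbS
      by_cases hd : (d : V) ∈ S
      · exact ih hd
      · exact absurd ⟨hd, (u : V), hbS, (SimpleGraph.comap_adj.mp hadj).symm⟩ (hdisj _ d.2)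
  intro x hx
  obtain ⟨w⟩ := hconn ⟨a, haX⟩ ⟨x, hx⟩
  exact key w haS

/-- Inserting a vertex adjacent to a connected set keeps the induced graph connected. -/
lemma conn_insert (G : SimpleGraph V) (S : Set V) (hconn : (G.induce S).Connected)
    {v s : V} (hs : s ∈ S) (hadj : G.Adj v s) :
    (G.induce (insert v S)).Connected := by
  rw [SimpleGraph.connected_iff]
  refine ⟨?_, ⟨⟨v, Set.mem_insert _ _⟩⟩⟩
  have key : ∀ x : ↥(insert v S),
      (G.induce (insert v S)).Reachable x ⟨s, Set.mem_insert_of_mem _ hs⟩ := by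
    rintro ⟨x, hx⟩
    rcases hx with rfl | hxS
    · exact SimpleGraph.Adj.reachable (by exact hadj)
    · exact (hconn ⟨x, hxS⟩ ⟨s, hs⟩).map
        (SimpleGraph.induceHomOfLE G (Set.subset_insert v S)).toHom
  intro x y
  exact (key x).trans (key y).symm

/-- Iso between deleting a vertex inside a double induce and the induce on `X \ {u}`. -/
def delIso (G : SimpleGraph V) (X : Set V) (u : V) (hu : u ∈ X) :
    ((G.induce X).induce {x : ↥X | x ≠ ⟨u, hu⟩}) ≃g G.induce (X \ {u}) where
  toEquiv := { toFun := fun a => ⟨a.1.1, a.1.2, fun h => a.2 (Subtype.ext h)⟩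
               invFun := fun b => ⟨⟨b.1, b.2.1⟩, fun h => b.2.2 (congrArg Subtype.val h)⟩
               left_inv := fun _ => rfl
               right_inv := fun _ => rfl }
  map_rel_iff' := Iff.rfl

end Aux

/-- Let `P` be a hereditary graph class, `G` a finite connected graph
not in `P`, and `Z` a nonempty set of vertices such that every forbidden set `X` of `G`
contains `Z` and induces a biconnected subgraph.  Then for every `S ⊆ V(G)` with
`Z ⊆ S` and `G[S]` connected: `S` is a maximal connected `P` set of `G` if and only
if `V(G) \ N(S)` is a maximal `P` set of `G`. -/
theorem maxConnPSet_iff_compl_nbhd_maxPSet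
    (P : GraphClass) (hne : P.NonemptyClass) (hiso : P.IsoClosed) (hher : P.Hereditary)
    {V : Type} [Fintype V] (G : SimpleGraph V) (hGconn : G.Connected) (hGP : ¬ P V G)
    (Z : Set V) (hZne : Z.Nonempty)
    (hforb : ∀ X : Set V, IsForbiddenSet P G X → Z ⊆ X ∧ IsBiconnected (G.induce X))
    (S : Set V) (hZS : Z ⊆ S) (hSconn : (G.induce S).Connected) :
    IsMaxConnPSet P G S ↔ IsMaxPSet P G ((setNbhd G S)ᶜ) := by
  set W : Set V := (setNbhd G S)ᶜ with hWdef
  have hSne : S.Nonempty := hZne.mono hZS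
  have hSW : S ⊆ W := fun x hx hmem => hmem.1 hx
  constructor
  · rintro ⟨⟨hSP, -⟩, hSmax⟩
    constructor
    · by_contra hWnP
      obtain ⟨X, hXW, hXf⟩ := exists_forbidden P G W hWnP
      obtain ⟨hZX, hXbi⟩ := hforb X hXf
      have hXS : X ⊆ S := by
        refine escape_subset G S X hXbi.1 ?_ ?_
        · obtain ⟨z, hz⟩ := hZne
          exact ⟨z, hZX hz, hZS hz⟩
        · exact fun x hx => hXW hx
      exact hXf.1 (IsPSet.mono P hiso hher G hXS hSP)
    · intro T hWT hTP
      obtain ⟨v, hvT, hvW⟩ := Set.exists_of_ssubset hWT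
      have hvN : v ∈ setNbhd G S := not_not.mp hvW
      obtain ⟨hvS, s, hsS, hadj⟩ := hvN
      have hsub : insert v S ⊆ T := by
        intro x hx
        rcases hx with rfl | hxS
        · exact hvT
        · exact hWT.subset (hSW hxS)
      have hconn' : (G.induce (insert v S)).Connected := conn_insert G S hSconn hsS hadj
      have hP' : IsPSet P G (insert v S) := IsPSet.mono P hiso hher G hsub hTP
      exact hSmax (insert v S) (Set.ssubset_insert hvS) ⟨hP', hconn'⟩
  · rintro ⟨hWP, hWmax⟩
    refine ⟨⟨IsPSet.mono P hiso hher G hSW hWP, hSconn⟩, ?_⟩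
    rintro T hST ⟨hTP, hTconn⟩
    have hTN : ∃ u ∈ T, u ∈ setNbhd G S := by
      by_contra h
      push_neg at h
      have hTS : T ⊆ S := by
        refine escape_subset G S T hTconn ?_ h
        obtain ⟨z, hz⟩ := hSne
        exact ⟨z, hST.subset hz, hz⟩
      exact hST.not_subset hTS
    obtain ⟨u, huT, huN⟩ := hTN
    have huW : u ∉ W := not_not_intro huN
    have hWu : W ⊂ insert u W := Set.ssubset_insert huW
    have hnotP : ¬ IsPSet P G (insert u W) := hWmax _ hWu
    obtain ⟨X, hXuW, hXf⟩ := exists_forbidden P G (insert u W) hnotP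
    have huX : u ∈ X := by
      by_contra huX
      have hXW : X ⊆ W := fun x hx => (hXuW hx).resolve_left (fun h => huX (h ▸ hx))
      exact hXf.1 (IsPSet.mono P hiso hher G hXW hWP)
    obtain ⟨hZX, hXbi⟩ := hforb X hXf
    have hdel : (G.induce (X \ {u})).Connected :=
      (SimpleGraph.Iso.connected_iff (delIso G X u huX)).mp (hXbi.2 ⟨u, huX⟩)
    have huS : u ∉ S := huN.1
    have hZdel : Z ⊆ X \ {u} := fun z hz => ⟨hZX hz, fun h => huS (h ▸ hZS hz)⟩
    have hXdS : X \ {u} ⊆ S := by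
      refine escape_subset G S (X \ {u}) hdel ?_ ?_
      · obtain ⟨z, hz⟩ := hZne
        exact ⟨z, hZdel hz, hZS hz⟩
      · intro x hx hmem
        have hxW : x ∈ W := (hXuW hx.1).resolve_left (fun h => hx.2 h)
        exact hxW hmem
    have hXT : X ⊆ T := by
      intro x hx
      by_cases hxu : x = u
      · exact hxu ▸ huT
      · exact hST.subset (hXdS ⟨hx, hxu⟩)
    exact hXf.1 (IsPSet.mono P hiso hher G hXT hTP)
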